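/- Define r_bind(b_L, b_R) = (∫ B(γ+b_L−p)g(γ)dγ) / (∫ (1 − B(p+γ+b_R) + B(γ+b_L−p)) g(γ)dγ), where B is a strictly increasing CDF with values in (0,1) and g a probability density. Then r_bind is strictly increasing in b_R and strictly increasing in b_L. -/
import Mathlib


open MeasureTheory

/-- The binding-referendum threshold r_bind is strictly increasing in b_R and in b_L. -/
theorem stmt_4 (B g : ℝ → ℝ) (hBm : StrictMono B) (hB01 : ∀ z, 0 < B z ∧ B z < 1)
    (hgpos : ∀ x, 0 < g x) (hg1 : ∫ x, g x = 1) (hgi : Integrable g)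
    (p : ℝ)
    (hint : ∀ a : ℝ, Integrable (fun γ => B (γ + a) * g γ)) :
    (∀ bL : ℝ, StrictMono (fun bR : ℝ =>
        (∫ γ, B (γ + bL - p) * g γ) /
          (∫ γ, (1 - B (p + γ + bR) + B (γ + bL - p)) * g γ))) ∧
    (∀ bR : ℝ, StrictMono (fun bL : ℝ =>
        (∫ γ, B (γ + bL - p) * g γ) /
          (∫ γ, (1 - B (p + γ + bR) + B (γ + bL - p)) * g γ))) := by
  set N : ℝ → ℝ := fun a => ∫ γ, B (γ + a) * g γ with hN
  -- positivity of integrals of everywhere-positive integrable functions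
  have hposint : ∀ f : ℝ → ℝ, (∀ x, 0 < f x) → Integrable f → 0 < ∫ x, f x := by
    intro f hf hfi
    rw [integral_pos_iff_support_of_nonneg (fun x => (hf x).le) hfi]
    have : Function.support f = Set.univ := by
      ext x; simp [Function.support, (hf x).ne']
    rw [this]
    simp [Real.volume_univ]
  have hNpos : ∀ a, 0 < N a := fun a =>
    hposint _ (fun x => mul_pos (hB01 _).1 (hgpos x)) (hint a)
  have hNlt1 : ∀ a, N a < 1 := by
    intro a
    have h1 : 0 < ∫ γ, (g γ - B (γ + a) * g γ) := by
      apply hposint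
      · intro x
        have := (hB01 (x + a)).2
        nlinarith [hgpos x]
      · exact hgi.sub (hint a)
    rw [integral_sub hgi (hint a), hg1] at h1
    linarith
  have hNmono : StrictMono N := by
    intro a b hab
    have h1 : 0 < ∫ γ, (B (γ + b) * g γ - B (γ + a) * g γ) := by
      apply hposint
      · intro x
        have := hBm (by linarith : x + a < x + b)
        nlinarith [hgpos x]
      · exact (hint b).sub (hint a)
    rw [integral_sub (hint b) (hint a)] at h1
    linarith
  have hNum : ∀ bL : ℝ, (∫ γ, B (γ + bL - p) * g γ) = N (bL - p) := by
    intro bL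
    simp only [hN]
    congr 1
    funext γ
    rw [show γ + bL - p = γ + (bL - p) by ring]
  have hD : ∀ bL bR : ℝ, (∫ γ, (1 - B (p + γ + bR) + B (γ + bL - p)) * g γ)
      = 1 - N (p + bR) + N (bL - p) := by
    intro bL bR
    have heq : (fun γ => (1 - B (p + γ + bR) + B (γ + bL - p)) * g γ)
        = fun γ => (g γ - B (γ + (p + bR)) * g γ) + B (γ + (bL - p)) * g γ := by
      funext γ
      rw [show p + γ + bR = γ + (p + bR) by ring, show γ + bL - p = γ + (bL - p) by ring]
      ring
    have hi1 : Integrable (fun γ => g γ - B (γ + (p + bR)) * g γ) := hgi.sub (hint _)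
    rw [heq, integral_add hi1 (hint _), integral_sub hgi (hint _), hg1]
  constructor
  · intro bL x y hxy
    simp only
    rw [hNum bL, hD bL x, hD bL y]
    have hn : 0 < N (bL - p) := hNpos _
    have hx1 : N (p + x) < 1 := hNlt1 _
    have hy1 : N (p + y) < 1 := hNlt1 _
    have hlt : N (p + x) < N (p + y) := hNmono (by linarith)
    apply div_lt_div_of_pos_left hn
    · linarith
    · linarith
  · intro bR x y hxy
    simp only
    rw [hNum x, hNum y, hD x bR, hD y bR]
    have hn1 : 0 < N (x - p) := hNpos _
    have hn2 : 0 < N (y - p) := hNpos _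
    have hm : 0 < 1 - N (p + bR) := by linarith [hNlt1 (p + bR)]
    have hlt : N (x - p) < N (y - p) := hNmono (by linarith)
    rw [div_lt_div_iff₀ (by linarith) (by linarith)]
    nlinarith
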